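/- The cofinal-branches tree pruning claim: let T be a tree on 2 × ω with X = p[T] (the projection of the branches) a subset of [ω]^ω linearly ordered by ⊆* with no pseudointersection, and assume X is countably directed downward-cofinally witnessed. Then the subtree T' = { (s,t) ∈ T : p[T_{(s,t)}] is cofinal in X } satisfies: for every (s,t) ∈ T', p[T'_{(s,t)}] is cofinal in X. -/
import Mathlib


abbrev Cantor : Type := ℕ → Bool

def cset (x : Cantor) : Set ℕ := {n | x n = true}

def AlmostSub (a b : Set ℕ) : Prop := (a \ b).Finite

/-- `(x, w)` is a branch through the tree `T` on `2 × ω`. -/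
def IsBranch (T : Set (List Bool × List ℕ)) (x : Cantor) (w : ℕ → ℕ) : Prop :=
  ∀ n, (List.ofFn (fun i : Fin n => x i), List.ofFn (fun i : Fin n => w i)) ∈ T

/-- The branch `(x, w)` passes through the node `(s, t)`. -/
def ThroughNode (x : Cantor) (w : ℕ → ℕ) (s : List Bool) (t : List ℕ) : Prop :=
  List.ofFn (fun i : Fin s.length => x i) = s ∧ List.ofFn (fun i : Fin t.length => w i) = t

/-- `p[T_{(s,t)}]`: the projection of the branches of `T` through the node `(s, t)`. -/
def projThrough (T : Set (List Bool × List ℕ)) (s : List Bool) (t : List ℕ) :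
    Set Cantor :=
  {x | ∃ w, IsBranch T x w ∧ ThroughNode x w s t}

/-- The projection `p[T]` of the tree `T`. -/
def projT (T : Set (List Bool × List ℕ)) : Set Cantor := {x | ∃ w, IsBranch T x w}

/-- `Y` is cofinal in `X` (with respect to `⊆*`). -/
def CofinalIn (Y X : Set Cantor) : Prop := ∀ x ∈ X, ∃ y ∈ Y, AlmostSub (cset y) (cset x)


lemma almostSub_trans {a b c : Set ℕ} (h1 : AlmostSub a b) (h2 : AlmostSub b c) :
    AlmostSub a c := by
  have hs : a \ c ⊆ (a \ b) ∪ (b \ c) := by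
    intro n hn
    by_cases hb : n ∈ b
    · exact Or.inr ⟨hb, hn.2⟩
    · exact Or.inl ⟨hn.1, hb⟩
  exact (h1.union h2).subset hs

lemma throughNode_self (y : Cantor) (w : ℕ → ℕ) (n : ℕ) :
    ThroughNode y w (List.ofFn fun i : Fin n => y i) (List.ofFn fun i : Fin n => w i) := by
  constructor <;> (apply List.ext_getElem <;> simp)

/-- The cofinal-branches tree pruning claim: if `T` is a tree on `2 × ω` whose projection
`X = p[T]` is a family of infinite subsets of `ω`, linearly ordered by `⊆*`, with no
pseudointersection, and every countable subset of `X` has a strict `⊆*`-lower bound in `X`,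
then for `T' = { (s,t) ∈ T : p[T_{(s,t)}] cofinal in X }`, every node `(s,t) ∈ T'`
satisfies that `p[T'_{(s,t)}]` is cofinal in `X`. -/
theorem tree_pruning_cofinal (T : Set (List Bool × List ℕ))
    (htree : ∀ st ∈ T, st.1.length = st.2.length ∧
      ∀ n : ℕ, (st.1.take n, st.2.take n) ∈ T)
    (hinf : ∀ x ∈ projT T, (cset x).Infinite)
    (hlin : ∀ x ∈ projT T, ∀ y ∈ projT T,
      AlmostSub (cset x) (cset y) ∨ AlmostSub (cset y) (cset x))
    (hnops : ¬ ∃ z : Set ℕ, z.Infinite ∧ ∀ x ∈ projT T, AlmostSub z (cset x))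
    (hctbl : ∀ C ⊆ projT T, C.Countable → ∃ x ∈ projT T, ∀ c ∈ C,
      AlmostSub (cset x) (cset c) ∧ ¬ AlmostSub (cset c) (cset x)) :
    ∀ st ∈ {st ∈ T | CofinalIn (projThrough T st.1 st.2) (projT T)},
      CofinalIn
        (projThrough {st ∈ T | CofinalIn (projThrough T st.1 st.2) (projT T)} st.1 st.2)
        (projT T) := by
  classical
  intro st hst x hx
  obtain ⟨hstT, hstCof⟩ := hst
  have hchoice : ∀ uv : List Bool × List ℕ,
      uv ∈ T ∧ ¬ CofinalIn (projThrough T uv.1 uv.2) (projT T) → ∃ b, b ∈ projT T ∧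
      ∀ y ∈ projThrough T uv.1 uv.2, ¬ AlmostSub (cset y) (cset b) := by
    intro uv huv
    have h := huv.2
    unfold CofinalIn at h
    push_neg at h
    obtain ⟨b, hbX, hb⟩ := h
    exact ⟨b, hbX, fun y hy h' => (hb y hy) h'⟩
  set Bad : Set (List Bool × List ℕ) :=
    {uv | uv ∈ T ∧ ¬ CofinalIn (projThrough T uv.1 uv.2) (projT T)} with hBad
  let f : List Bool × List ℕ → Cantor := fun uv =>
    if h : uv ∈ Bad then (hchoice uv h).choose else x
  have hfX : ∀ uv ∈ Bad, f uv ∈ projT T := by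
    intro uv huv
    simp only [f, dif_pos huv]
    exact (hchoice uv huv).choose_spec.1
  have hfbound : ∀ uv ∈ Bad, ∀ y ∈ projThrough T uv.1 uv.2,
      ¬ AlmostSub (cset y) (cset (f uv)) := by
    intro uv huv
    simp only [f, dif_pos huv]
    exact (hchoice uv huv).choose_spec.2
  set C : Set Cantor := insert x (f '' Bad) with hC
  have hCsub : C ⊆ projT T := by
    intro c hc
    rcases hc with rfl | ⟨uv, huv, rfl⟩
    · exact hx
    · exact hfX uv huv
  have hCcount : C.Countable := ((Set.to_countable Bad).image f).insert x
  obtain ⟨z, hzX, hz⟩ := hctbl C hCsub hCcount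
  obtain ⟨y, hyY, hyz⟩ := hstCof z hzX
  obtain ⟨w, hbr, hthr⟩ := hyY
  have hyX : y ∈ projT T := ⟨w, hbr⟩
  have hbr' : IsBranch {st ∈ T | CofinalIn (projThrough T st.1 st.2) (projT T)} y w := by
    intro n
    refine ⟨hbr n, ?_⟩
    by_contra hnot
    have hmem : (List.ofFn (fun i : Fin n => y i), List.ofFn (fun i : Fin n => w i)) ∈ Bad :=
      ⟨hbr n, hnot⟩
    set uv0 : List Bool × List ℕ :=
      (List.ofFn (fun i : Fin n => y i), List.ofFn (fun i : Fin n => w i)) with huv0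
    have hyproj : y ∈ projThrough T uv0.1 uv0.2 := ⟨w, hbr, throughNode_self y w n⟩
    have h1 := hfbound uv0 hmem y hyproj
    have hfC : f uv0 ∈ C := Set.mem_insert_of_mem _ ⟨uv0, hmem, rfl⟩
    have h2 := hz _ hfC
    rcases hlin y hyX (f uv0) (hfX uv0 hmem) with h | h
    · exact h1 h
    · exact h2.2 (almostSub_trans h hyz)
  exact ⟨y, ⟨w, hbr', hthr⟩, almostSub_trans hyz (hz x (Set.mem_insert x _)).1⟩
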